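/- For any q ≥ 0, the curl of every element of the Nédélec space ND_q := [P_q]³ + x × [P_q]³ on ℝ³ belongs to the Raviart–Thomas space RT_q := [P_q]³ + P_q·x, and is divergence-free. Hence curl(ND_q) ⊆ {w ∈ RT_q : div w = 0}. -/

import Mathlib

open Matrix

/-- Partial derivative in the `i`-th coordinate direction. -/
noncomputable def pd (i : Fin 3) (f : (Fin 3 → ℝ) → ℝ) (x : Fin 3 → ℝ) : ℝ :=
  fderiv ℝ f x (Pi.single i 1)

/-- Divergence of a vector field on ℝ³. -/
noncomputable def divergence (v : (Fin 3 → ℝ) → Fin 3 → ℝ) (x : Fin 3 → ℝ) : ℝ :=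
  ∑ i, pd i (fun y => v y i) x

/-- Curl of a vector field on ℝ³. -/
noncomputable def curl (v : (Fin 3 → ℝ) → Fin 3 → ℝ) (x : Fin 3 → ℝ) : Fin 3 → ℝ :=
  ![pd 1 (fun y => v y 2) x - pd 2 (fun y => v y 1) x,
    pd 2 (fun y => v y 0) x - pd 0 (fun y => v y 2) x,
    pd 0 (fun y => v y 1) x - pd 1 (fun y => v y 0) x]

/-- `f` is a scalar polynomial map of total degree at most `q`. -/
def IsScalarPolyDeg (q : ℕ) (f : (Fin 3 → ℝ) → ℝ) : Prop :=
  ∃ p : MvPolynomial (Fin 3) ℝ, p.totalDegree ≤ q ∧ ∀ x, f x = MvPolynomial.eval x p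

/-- `v` is a vector-valued polynomial map with each component of total degree at most `q`. -/
def IsPolyMapDeg (q : ℕ) (v : (Fin 3 → ℝ) → Fin 3 → ℝ) : Prop :=
  ∃ p : Fin 3 → MvPolynomial (Fin 3) ℝ,
    (∀ i, (p i).totalDegree ≤ q) ∧ ∀ x i, v x i = MvPolynomial.eval x (p i)

/-- Membership in the Nédélec space `ND_q = [P_q]³ + x × [P_q]³`. -/
def MemNedelec (q : ℕ) (v : (Fin 3 → ℝ) → Fin 3 → ℝ) : Prop :=
  ∃ v₁ v₂, IsPolyMapDeg q v₁ ∧ IsPolyMapDeg q v₂ ∧ ∀ x, v x = v₁ x + crossProduct x (v₂ x)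

/-- Membership in the Raviart–Thomas space `RT_q = [P_q]³ + P_q x`. -/
def MemRT (q : ℕ) (v : (Fin 3 → ℝ) → Fin 3 → ℝ) : Prop :=
  ∃ v₁ p, IsPolyMapDeg q v₁ ∧ IsScalarPolyDeg q p ∧ ∀ x, v x = v₁ x + p x • x

open MvPolynomial

lemma td_pderiv_le (i : Fin 3) (f : MvPolynomial (Fin 3) ℝ) :
    (pderiv i f).totalDegree ≤ f.totalDegree := by
  conv_lhs => rw [f.as_sum]
  rw [map_sum]
  refine totalDegree_finsetSum_le fun s hs => ?_
  rw [pderiv_monomial]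
  refine (totalDegree_monomial_le _ _).trans (le_trans ?_ (le_totalDegree hs))
  exact Finsupp.sum_le_sum_index tsub_le_self (fun _ _ => fun _ _ h => h) (fun _ _ => rfl)

lemma td_X_mul_pderiv_le (i : Fin 3) (f : MvPolynomial (Fin 3) ℝ) :
    (X i * pderiv i f).totalDegree ≤ f.totalDegree := by
  conv_lhs => rw [f.as_sum]
  rw [map_sum, Finset.mul_sum]
  refine totalDegree_finsetSum_le fun s hs => ?_
  rw [pderiv_monomial]
  by_cases h : s i = 0
  · simp [h]
  · rw [X, monomial_mul, one_mul]
    have hs' : Finsupp.single i 1 + (s - Finsupp.single i 1) = s := by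
      ext j
      by_cases hj : j = i
      · subst hj; simp [Nat.add_sub_cancel' (Nat.one_le_iff_ne_zero.mpr h)]
      · simp [Finsupp.single_apply, Ne.symm hj]
    rw [hs']
    exact (totalDegree_monomial_le _ _).trans (le_totalDegree hs)

lemma pderiv_comm' (i j : Fin 3) (f : MvPolynomial (Fin 3) ℝ) :
    pderiv i (pderiv j f) = pderiv j (pderiv i f) := by
  rcases eq_or_ne i j with rfl | hij
  · rfl
  rw [f.as_sum, map_sum, map_sum, map_sum, map_sum]
  refine Finset.sum_congr rfl fun s _ => ?_
  simp only [pderiv_monomial]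
  congr 1
  · rw [tsub_tsub, tsub_tsub, add_comm]
  · rw [Finsupp.tsub_apply, Finsupp.tsub_apply, Finsupp.single_apply, Finsupp.single_apply,
      if_neg hij, if_neg (Ne.symm hij)]
    simp only [Nat.sub_zero]
    ring

noncomputable def evalD (p : MvPolynomial (Fin 3) ℝ) (x : Fin 3 → ℝ) : (Fin 3 → ℝ) →L[ℝ] ℝ :=
  ∑ j, MvPolynomial.eval x (pderiv j p) • ContinuousLinearMap.proj (R := ℝ) (φ := fun _ : Fin 3 => ℝ) j

lemma hasFDerivAt_eval (p : MvPolynomial (Fin 3) ℝ) (x : Fin 3 → ℝ) :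
    HasFDerivAt (fun y => MvPolynomial.eval y p) (evalD p x) x := by
  induction p using MvPolynomial.induction_on with
  | C a =>
      have : evalD (C a) x = 0 := by simp [evalD, pderiv_C]
      rw [this]
      simpa using hasFDerivAt_const (MvPolynomial.eval x (C a) ) x |>.congr_fderiv (by simp)
  | add p q hp hq =>
      have : evalD (p + q) x = evalD p x + evalD q x := by
        simp [evalD, add_smul, Finset.sum_add_distrib]
      rw [this]
      have hf : (fun y => MvPolynomial.eval y (p + q)) =
          (fun y => MvPolynomial.eval y p) + (fun y => MvPolynomial.eval y q) := by
        funext y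
        simp
      rw [hf]
      exact hp.add hq
  | mul_X p i hp =>
      have h2 : HasFDerivAt (fun y : Fin 3 → ℝ => y i)
          (ContinuousLinearMap.proj (R := ℝ) (φ := fun _ : Fin 3 => ℝ) i) x :=
        (ContinuousLinearMap.proj (R := ℝ) (φ := fun _ : Fin 3 => ℝ) i).hasFDerivAt
      have := hp.mul h2
      have he : evalD (p * X i) x = MvPolynomial.eval x p •
          ContinuousLinearMap.proj (R := ℝ) (φ := fun _ : Fin 3 => ℝ) i + x i • evalD p x := by
        ext y
        simp only [evalD, pderiv_mul, pderiv_X, ContinuousLinearMap.add_apply,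
          ContinuousLinearMap.sum_apply, ContinuousLinearMap.smul_apply,
          ContinuousLinearMap.proj_apply, _root_.map_add, _root_.map_mul, eval_X, smul_eq_mul,
          Finset.smul_sum, Finset.sum_add_distrib]
        rw [Fin.sum_univ_three, Fin.sum_univ_three]
        simp only [Pi.single_apply, Finsupp.single_apply]
        fin_cases i <;> simp <;> ring
      rw [he]
      have hf : (fun y => MvPolynomial.eval y (p * X i)) =
          (fun y => MvPolynomial.eval y p) * (fun y : Fin 3 → ℝ => y i) := by
        funext y
        simp
      rw [hf]
      exact this

lemma pd_eval (i : Fin 3) (p : MvPolynomial (Fin 3) ℝ) (x : Fin 3 → ℝ) :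
    pd i (fun y => MvPolynomial.eval y p) x = MvPolynomial.eval x (pderiv i p) := by
  rw [pd, (hasFDerivAt_eval p x).fderiv]
  simp only [evalD, ContinuousLinearMap.sum_apply, ContinuousLinearMap.smul_apply,
    ContinuousLinearMap.proj_apply, smul_eq_mul]
  rw [Fin.sum_univ_three]
  simp only [Pi.single_apply]
  fin_cases i <;> simp

theorem curl_Nedelec_mem_RT_divFree (q : ℕ) (v : (Fin 3 → ℝ) → Fin 3 → ℝ)
    (hv : MemNedelec q v) :
    MemRT q (curl v) ∧ ∀ x, divergence (curl v) x = 0 := by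
  obtain ⟨v₁, v₂, ⟨p, hp, hp'⟩, ⟨r, hr, hr'⟩, hsum⟩ := hv
  set Q : Fin 3 → MvPolynomial (Fin 3) ℝ :=
    ![p 0 + (X 1 * r 2 - X 2 * r 1), p 1 + (X 2 * r 0 - X 0 * r 2),
      p 2 + (X 0 * r 1 - X 1 * r 0)] with hQdef
  have hQ : ∀ x i, v x i = MvPolynomial.eval x (Q i) := by
    intro x i
    rw [hsum x]
    fin_cases i <;>
      simp [Q, cross_apply, hp', hr']
  set Cp : Fin 3 → MvPolynomial (Fin 3) ℝ :=
    ![pderiv 1 (Q 2) - pderiv 2 (Q 1), pderiv 2 (Q 0) - pderiv 0 (Q 2),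
      pderiv 0 (Q 1) - pderiv 1 (Q 0)] with hCpdef
  have e0 : (fun y => v y 0) = fun y => MvPolynomial.eval y (Q 0) := funext fun y => hQ y 0
  have e1 : (fun y => v y 1) = fun y => MvPolynomial.eval y (Q 1) := funext fun y => hQ y 1
  have e2 : (fun y => v y 2) = fun y => MvPolynomial.eval y (Q 2) := funext fun y => hQ y 2
  have hC : ∀ x i, curl v x i = MvPolynomial.eval x (Cp i) := by
    intro x i
    fin_cases i
    · show pd 1 (fun y => v y 2) x - pd 2 (fun y => v y 1) x = _
      rw [e2, e1, pd_eval, pd_eval]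
      simp [Cp]
    · show pd 2 (fun y => v y 0) x - pd 0 (fun y => v y 2) x = _
      rw [e0, e2, pd_eval, pd_eval]
      simp [Cp]
    · show pd 0 (fun y => v y 1) x - pd 1 (fun y => v y 0) x = _
      rw [e1, e0, pd_eval, pd_eval]
      simp [Cp]
  have c0 : (fun y => curl v y 0) = fun y => MvPolynomial.eval y (Cp 0) := funext fun y => hC y 0
  have c1 : (fun y => curl v y 1) = fun y => MvPolynomial.eval y (Cp 1) := funext fun y => hC y 1
  have c2 : (fun y => curl v y 2) = fun y => MvPolynomial.eval y (Cp 2) := funext fun y => hC y 2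
  constructor
  · -- MemRT
    set D : MvPolynomial (Fin 3) ℝ := pderiv 0 (r 0) + pderiv 1 (r 1) + pderiv 2 (r 2) with hDdef
    set W : Fin 3 → MvPolynomial (Fin 3) ℝ := fun i => Cp i - X i * D with hWdef
    refine ⟨fun x i => MvPolynomial.eval x (W i), fun x => MvPolynomial.eval x D,
      ⟨W, ?_, fun _ _ => rfl⟩, ⟨D, ?_, fun _ => rfl⟩, ?_⟩
    · -- degree bound for W
      intro i
      have hWi : W i = (Cp i - X i * D) := rfl
      have key : W i = ![pderiv 1 (p 2) - pderiv 2 (p 1), pderiv 2 (p 0) - pderiv 0 (p 2),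
            pderiv 0 (p 1) - pderiv 1 (p 0)] i
          - (2 : MvPolynomial (Fin 3) ℝ) * r i
          - (X 0 * pderiv 0 (r i) + X 1 * pderiv 1 (r i) + X 2 * pderiv 2 (r i)) := by
        fin_cases i <;>
          simp [W, Cp, Q, D, pderiv_mul, pderiv_X, Pi.single_apply] <;> ring
      rw [key]
      have h1 : ∀ a b : Fin 3, (pderiv a (p b)).totalDegree ≤ q :=
        fun a b => (td_pderiv_le a (p b)).trans (hp b)
      have hA : ((![pderiv 1 (p 2) - pderiv 2 (p 1), pderiv 2 (p 0) - pderiv 0 (p 2),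
          pderiv 0 (p 1) - pderiv 1 (p 0)] : Fin 3 → MvPolynomial (Fin 3) ℝ) i).totalDegree ≤ q := by
        fin_cases i <;>
          simp only [Matrix.cons_val_zero, Matrix.cons_val_one, Matrix.head_cons,
            Matrix.cons_val_two, Matrix.tail_cons] <;>
          exact (totalDegree_sub _ _).trans (max_le (h1 _ _) (h1 _ _))
      have h2 : ((2 : MvPolynomial (Fin 3) ℝ) * r i).totalDegree ≤ q := by
        refine (totalDegree_mul _ _).trans ?_
        have h20 : ((2 : MvPolynomial (Fin 3) ℝ)).totalDegree = 0 := by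
          rw [show (2 : MvPolynomial (Fin 3) ℝ) = C 2 from (map_ofNat C 2).symm, totalDegree_C]
        rw [h20, Nat.zero_add]
        exact hr i
      have h3 : (X 0 * pderiv 0 (r i) + X 1 * pderiv 1 (r i)
          + X 2 * pderiv 2 (r i)).totalDegree ≤ q :=
        (totalDegree_add _ _).trans (max_le ((totalDegree_add _ _).trans
          (max_le ((td_X_mul_pderiv_le 0 _).trans (hr i))
            ((td_X_mul_pderiv_le 1 _).trans (hr i)))) ((td_X_mul_pderiv_le 2 _).trans (hr i)))
      exact (totalDegree_sub _ _).trans (max_le ((totalDegree_sub _ _).trans (max_le hA h2)) h3)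
    · -- degree bound for D
      exact (totalDegree_add _ _).trans (max_le ((totalDegree_add _ _).trans
        (max_le ((td_pderiv_le 0 _).trans (hr 0)) ((td_pderiv_le 1 _).trans (hr 1))))
        ((td_pderiv_le 2 _).trans (hr 2)))
    · intro x
      funext i
      rw [hC x i]
      show _ = MvPolynomial.eval x (W i) + MvPolynomial.eval x D * x i
      rw [hWdef]
      simp only [_root_.map_sub, _root_.map_add, _root_.map_mul, eval_X]
      ring
  · -- divergence free
    intro x
    rw [divergence, Fin.sum_univ_three, c0, c1, c2, pd_eval, pd_eval, pd_eval,
      ← map_add, ← map_add]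
    have : pderiv 0 (Cp 0) + pderiv 1 (Cp 1) + pderiv 2 (Cp 2) = 0 := by
      simp only [Cp, Matrix.cons_val_zero, Matrix.cons_val_one, Matrix.head_cons,
        Matrix.cons_val_two, Matrix.tail_cons, map_sub]
      rw [pderiv_comm' 0 1, pderiv_comm' 0 2, pderiv_comm' 1 2]
      ring
    rw [this, map_zero]
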